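/- For every positive integer k, e^k · (2k)! / (k^k · 4^k · k!) ≤ √2. -/

import Mathlib

/-- For all positive integers `k`,
`e^k · (2k)! / (k^k · 4^k · k!) ≤ √2`. -/
theorem stmt_3 (k : ℕ) (hk : 0 < k) :
    Real.exp 1 ^ k * (Nat.factorial (2 * k) : ℝ) /
      ((k : ℝ) ^ k * 4 ^ k * (Nat.factorial k : ℝ)) ≤ Real.sqrt 2 := by
  have hkpos : (0:ℝ) < (k:ℝ) := by exact_mod_cast hk
  have hE : (0:ℝ) < Real.exp 1 := Real.exp_pos 1
  -- stirlingSeq (2k) ≤ stirlingSeq k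
  have hs : Stirling.stirlingSeq (2*k) ≤ Stirling.stirlingSeq k := by
    have h2 : k - 1 ≤ 2*k - 1 := by omega
    have := Stirling.stirlingSeq'_antitone h2
    simpa [Function.comp, Nat.succ_eq_add_one, Nat.sub_add_cancel hk,
      Nat.sub_add_cancel (by omega : 1 ≤ 2*k)] using this
  rw [Stirling.stirlingSeq, Stirling.stirlingSeq] at hs
  have hsqk : (0:ℝ) < Real.sqrt (2 * k) := Real.sqrt_pos.mpr (by positivity)
  have hsq2k : (0:ℝ) < Real.sqrt (2 * (2*k : ℕ) : ℝ) := Real.sqrt_pos.mpr (by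
    push_cast; positivity)
  have hd1 : (0:ℝ) < Real.sqrt (2 * (2*k : ℕ) : ℝ) * (((2*k : ℕ):ℝ) / Real.exp 1) ^ (2*k) := by
    have : (0:ℝ) < ((2*k : ℕ):ℝ) := by push_cast; positivity
    positivity
  have hd2 : (0:ℝ) < Real.sqrt (2 * k) * ((k:ℝ) / Real.exp 1) ^ k := by positivity
  rw [div_le_div_iff₀ hd1 hd2] at hs
  -- simplify √(2·(2k)) = √2 · √(2k)
  have hsplit : Real.sqrt (2 * (2*k : ℕ) : ℝ) = Real.sqrt 2 * Real.sqrt (2 * k) := by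
    push_cast
    rw [← Real.sqrt_mul (by norm_num : (0:ℝ) ≤ 2)]
  rw [hsplit] at hs
  -- expand powers
  have hpow1 : (((2*k : ℕ):ℝ) / Real.exp 1) ^ (2*k) =
      4 ^ k * (k:ℝ) ^ (2*k) / Real.exp 1 ^ (2*k) := by
    push_cast
    rw [div_pow]
    congr 1
    rw [mul_pow, pow_mul]
    norm_num
  rw [hpow1, div_pow] at hs
  rw [div_le_iff₀ (by positivity)]
  have hEk : (0:ℝ) < Real.exp 1 ^ k := by positivity
  have hexp : Real.exp 1 ^ (2*k) = Real.exp 1 ^ k * Real.exp 1 ^ k := by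
    rw [two_mul, pow_add]
  have hkk : (k:ℝ) ^ (2*k) = (k:ℝ)^k * (k:ℝ)^k := by rw [two_mul, pow_add]
  have h2 := hs
  rw [hexp, hkk] at h2
  have hkkpos : (0:ℝ) < (k:ℝ)^k := by positivity
  field_simp at h2
  rw [Real.exp_one_pow] at h2
  rw [show Real.exp 1 ^ k = Real.exp k by rw [← Real.exp_one_pow]]
  have hsq2 : (0:ℝ) < Real.sqrt 2 := by positivity
  have hsqk' : (0:ℝ) < Real.sqrt k := Real.sqrt_pos.mpr hkpos
  have hek : (0:ℝ) < Real.exp k := Real.exp_pos _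
  have hP : (0:ℝ) < Real.sqrt 2 * Real.sqrt k * (k:ℝ)^k * Real.exp k := by positivity
  nlinarith [h2, hP, mul_pos hsq2 hsqk', mul_pos hkkpos hek]
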